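/- Let C be a symmetric monoidal closed category with all small limits and colimits and terminal object t, and let a, b, c be pointed objects of C. Then there is an isomorphism hom_*(a, hom_*(b, c)) ≅ hom_*(a ∧ b, c) in C, natural in a, b, and c, and compatible with the basepoint morphisms from t. -/

import Mathlib

set_option linter.unusedSectionVars false
open CategoryTheory CategoryTheory.Limits CategoryTheory.MonoidalCategory
  CategoryTheory.MonoidalClosed

universe v u

namespace BasedObjects

variable {C : Type u} [Category.{v} C] [MonoidalCategory C] [SymmetricCategory C]
  [MonoidalClosed C] [HasLimits C] [HasColimits C]

/-- The object `(a ⊗ t) ⨿ (t ⊗ b)` appearing in the definition of the smash product of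
pointed objects `a` and `b`. -/
noncomputable def wedgeObj (a b : Under (⊤_ C)) : C :=
  (a.right ⊗ (⊤_ C : C)) ⨿ ((⊤_ C : C) ⊗ b.right)

/-- The canonical morphism `(a ⊗ t) ⨿ (t ⊗ b) ⟶ a ⊗ b` with components `id_a ⊗ pt_b` and
`pt_a ⊗ id_b`. -/
noncomputable def wedgeMap (a b : Under (⊤_ C)) : wedgeObj a b ⟶ a.right ⊗ b.right :=
  coprod.desc (a.right ◁ b.hom) (a.hom ▷ b.right)

/-- The smash product of pointed objects: the pushout of
`t ⟵ (a ⊗ t) ⨿ (t ⊗ b) ⟶ a ⊗ b`, pointed by the coprojection from `t`. -/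
noncomputable def smash (a b : Under (⊤_ C)) : Under (⊤_ C) :=
  Under.mk (pushout.inr (wedgeMap a b) (terminal.from (wedgeObj a b)))

/-- Functoriality of the smash product of pointed objects. -/
noncomputable def smashMap {a a' b b' : Under (⊤_ C)} (f : a ⟶ a') (g : b ⟶ b') :
    smash a b ⟶ smash a' b' :=
  Under.homMk
    (pushout.map (wedgeMap a b) (terminal.from (wedgeObj a b))
      (wedgeMap a' b') (terminal.from (wedgeObj a' b'))
      (f.right ⊗ₘ g.right) (𝟙 (⊤_ C))
      (coprod.map (f.right ▷ (⊤_ C : C)) ((⊤_ C : C) ◁ g.right))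
      (by
        dsimp [wedgeMap, wedgeObj]
        apply coprod.hom_ext
        · rw [coprod.inl_desc_assoc, coprod.map_desc, coprod.inl_desc,
            MonoidalCategory.tensorHom_def, whisker_exchange_assoc, ← MonoidalCategory.whiskerLeft_comp,
            Under.w g]
        · rw [coprod.inr_desc_assoc, coprod.map_desc, coprod.inr_desc,
            MonoidalCategory.tensorHom_def', ← whisker_exchange_assoc, ← comp_whiskerRight,
            Under.w f])
      (Subsingleton.elim _ _))
    (by dsimp [smash]; erw [pushout.inr_desc]; exact Category.id_comp _)

/-- Any two morphisms into an internal hom object of the form `[A, t]`, with `t` terminal,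
agree. -/
theorem hom_to_ihom_terminal_ext {A X : C} (f g : X ⟶ (ihom A).obj (⊤_ C : C)) : f = g :=
  uncurry_injective (Subsingleton.elim _ _)

/-- The canonical isomorphism `t ≅ [A, t]`, witnessing that the internal hom out of `A`
preserves the terminal object. -/
noncomputable def ihomTermIso (A : C) : (⊤_ C : C) ≅ (ihom A).obj (⊤_ C : C) where
  hom := curry (terminal.from _)
  inv := terminal.from _
  hom_inv_id := Subsingleton.elim _ _
  inv_hom_id := hom_to_ihom_terminal_ext _ _

/-- The morphism `t ⟶ [A, b]` adjoint to the composite `A ⊗ t ⟶ t ⟶ b` of the canonical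
morphism to the terminal object followed by the basepoint of `b`. -/
noncomputable def pointLeg (A : C) (b : Under (⊤_ C)) :
    (⊤_ C : C) ⟶ (ihom A).obj b.right :=
  curry (terminal.from (A ⊗ (⊤_ C : C)) ≫ b.hom)

/-- The composite `t ≅ [a, t] ⟶ [a, b]`, the first component of the basepoint of the based
hom object. -/
noncomputable def basedHomPointFst (a b : Under (⊤_ C)) :
    (⊤_ C : C) ⟶ (ihom a.right).obj b.right :=
  (ihomTermIso a.right).hom ≫ (ihom a.right).map b.hom

theorem basedHomPoint_w (a b : Under (⊤_ C)) :
    basedHomPointFst a b ≫ (pre a.hom).app b.right = 𝟙 (⊤_ C : C) ≫ pointLeg (⊤_ C : C) b := by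
  rw [Category.id_comp]
  dsimp [basedHomPointFst, pointLeg, ihomTermIso]
  rw [Category.assoc, ← pre_comm_ihom_map, curry_natural_right, ← Category.assoc]
  congr 1
  apply uncurry_injective
  exact Subsingleton.elim _ _

/-- The based hom object `hom_*(a, b)`: the pullback of `[a, b] ⟶ [t, b] ⟵ t`, pointed by
the induced morphism from `t`. -/
noncomputable def basedHom (a b : Under (⊤_ C)) : Under (⊤_ C) :=
  Under.mk (pullback.lift (basedHomPointFst a b) (𝟙 (⊤_ C : C)) (basedHomPoint_w a b))

theorem basedHomPointFst_map (a : Under (⊤_ C)) {x x' : Under (⊤_ C)} (g : x ⟶ x') :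
    basedHomPointFst a x ≫ (ihom a.right).map g.right = basedHomPointFst a x' := by
  dsimp [basedHomPointFst]
  rw [Category.assoc, ← Functor.map_comp, Under.w g]

theorem basedHomPointFst_pre {a a' : Under (⊤_ C)} (f : a ⟶ a') (x : Under (⊤_ C)) :
    basedHomPointFst a' x ≫ (pre f.right).app x.right = basedHomPointFst a x := by
  dsimp [basedHomPointFst]
  rw [Category.assoc, ← pre_comm_ihom_map, ← Category.assoc]
  congr 1
  exact hom_to_ihom_terminal_ext _ _

/-- Functoriality of the based hom object: contravariant in the first variable and
covariant in the second. -/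
noncomputable def basedHomMap {a a' x x' : Under (⊤_ C)} (f : a ⟶ a') (g : x ⟶ x') :
    basedHom a' x ⟶ basedHom a x' :=
  Under.homMk
    (pullback.map ((pre a'.hom).app x.right) (pointLeg (⊤_ C : C) x)
      ((pre a.hom).app x'.right) (pointLeg (⊤_ C : C) x')
      ((ihom a'.right).map g.right ≫ (pre f.right).app x'.right)
      (𝟙 (⊤_ C : C))
      ((ihom (⊤_ C : C)).map g.right)
      (by
        rw [Category.assoc, ← NatTrans.comp_app, ← MonoidalClosed.pre_map, Under.w f]
        exact pre_comm_ihom_map a'.hom g.right)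
      (by
        rw [Category.id_comp]
        dsimp [pointLeg]
        rw [← curry_natural_right, Category.assoc, Under.w g]))
    (by
      dsimp [basedHom]
      apply pullback.hom_ext
      · rw [Category.assoc, pullback.lift_fst, pullback.lift_fst_assoc, ← Category.assoc,
          basedHomPointFst_map, basedHomPointFst_pre, pullback.lift_fst]
      · rw [Category.assoc, pullback.lift_snd, pullback.lift_snd, Category.comp_id,
          pullback.lift_snd])

/-! ### Auxiliary material for Statement 7 -/

/-- The basepoint of a pointed object, with cleanly presented type. -/
noncomputable def pt (x : Under (⊤_ C)) : (⊤_ C : C) ⟶ x.right := x.hom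

theorem point_comp_ext {X Z W : C} {u v : X ⟶ W} (hW : W = (⊤_ C : C)) (g : W ⟶ Z) :
    u ≫ g = v ≫ g := by subst hW; rw [Subsingleton.elim u v]

theorem uncurry_comp_pre {X Y Z W : C} (f : X ⟶ Y) (g : Z ⟶ (ihom Y).obj W) :
    uncurry (g ≫ (pre f).app W) = f ▷ Z ≫ uncurry g := by
  rw [uncurry_eq, uncurry_eq, MonoidalCategory.whiskerLeft_comp, Category.assoc,
    id_tensor_pre_app_comp_ev, ← whisker_exchange_assoc]

theorem uncurry_pointLeg {Y : C} (y : Under (⊤_ C)) (k : Y ⟶ (⊤_ C : C)) :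
    uncurry (k ≫ pointLeg (⊤_ C : C) y) = terminal.from _ ≫ pt y := by
  rw [uncurry_natural_left, pointLeg, uncurry_curry]
  simp only [← Category.assoc]
  exact point_comp_ext rfl _

theorem uncurry_basedHomPointFst {Y : C} (b c : Under (⊤_ C)) (k : Y ⟶ (⊤_ C : C)) :
    uncurry (k ≫ basedHomPointFst b c) = terminal.from _ ≫ pt c := by
  dsimp [basedHomPointFst, ihomTermIso]
  rw [← curry_natural_right, uncurry_natural_left, uncurry_curry]
  simp only [← Category.assoc]
  exact point_comp_ext rfl _

theorem uncurry_basedHomPointFst' (b c : Under (⊤_ C)) :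
    uncurry (basedHomPointFst b c) = terminal.from _ ≫ pt c := by
  simpa using uncurry_basedHomPointFst b c (𝟙 _)

/-- The first projection of the based hom object. -/
noncomputable def bfst (x y : Under (⊤_ C)) :
    (basedHom x y).right ⟶ (ihom x.right).obj y.right :=
  pullback.fst ((pre x.hom).app y.right) (pointLeg (⊤_ C : C) y)

theorem basedHom_hom_ext (x y : Under (⊤_ C)) {X : C} {w v : X ⟶ (basedHom x y).right}
    (h : w ≫ bfst x y = v ≫ bfst x y) : w = v := by
  refine pullback.hom_ext h ?_
  exact Subsingleton.elim _ _

/-- Morphisms into the based hom object. -/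
noncomputable def blift {x y : Under (⊤_ C)} {X : C} (u : X ⟶ (ihom x.right).obj y.right)
    (w : u ≫ (pre x.hom).app y.right = terminal.from X ≫ pointLeg (⊤_ C : C) y) :
    X ⟶ (basedHom x y).right :=
  pullback.lift u (terminal.from X) w

theorem blift_fst {x y : Under (⊤_ C)} {X : C} (u : X ⟶ (ihom x.right).obj y.right)
    (w : u ≫ (pre x.hom).app y.right = terminal.from X ≫ pointLeg (⊤_ C : C) y) :
    blift u w ≫ bfst x y = u :=
  pullback.lift_fst _ _ _

theorem bfst_pre (x y : Under (⊤_ C)) :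
    bfst x y ≫ (pre x.hom).app y.right = terminal.from _ ≫ pointLeg (⊤_ C : C) y :=
  pullback.condition.trans (point_comp_ext rfl _)

theorem pt_bfst (x y : Under (⊤_ C)) :
    pt (basedHom x y) ≫ bfst x y = basedHomPointFst x y :=
  pullback.lift_fst _ _ _

theorem point_uncurry (x y : Under (⊤_ C)) {Y : C} (h : Y ⟶ (basedHom x y).right) :
    pt x ▷ Y ≫ uncurry (h ≫ bfst x y) = terminal.from _ ≫ pt y := by
  have e1 : uncurry ((h ≫ bfst x y) ≫ (pre x.hom).app y.right)
      = pt x ▷ Y ≫ uncurry (h ≫ bfst x y) := by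
    rw [uncurry_natural_left (h ≫ bfst x y) ((pre x.hom).app y.right),
      MonoidalClosed.uncurry_pre]
    dsimp only [Functor.id_obj, Functor.const_obj_obj]
    rw [whisker_exchange_assoc, ← uncurry_eq]
    rfl
  rw [← e1, Category.assoc, bfst_pre, ← Category.assoc, uncurry_pointLeg]

/- #### The smash product side -/

/-- The first coprojection into the smash product. -/
noncomputable def pinl (a b : Under (⊤_ C)) :
    a.right ⊗ b.right ⟶ (smash a b).right :=
  pushout.inl (wedgeMap a b) (terminal.from (wedgeObj a b))

/-- The second coprojection into the smash product. -/
noncomputable def pinr (a b : Under (⊤_ C)) :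
    (⊤_ C : C) ⟶ (smash a b).right :=
  pushout.inr (wedgeMap a b) (terminal.from (wedgeObj a b))

theorem pt_smash (a b : Under (⊤_ C)) : pt (smash a b) = pinr a b := rfl

theorem smash_cond (a b : Under (⊤_ C)) :
    wedgeMap a b ≫ pinl a b = terminal.from (wedgeObj a b) ≫ pinr a b :=
  pushout.condition

theorem wedge_inl (a b : Under (⊤_ C)) :
    (coprod.inl : a.right ⊗ (⊤_ C : C) ⟶ wedgeObj a b) ≫ wedgeMap a b
      = a.right ◁ pt b := by
  dsimp [wedgeMap]
  rw [coprod.inl_desc]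
  rfl

theorem wedge_inr (a b : Under (⊤_ C)) :
    (coprod.inr : (⊤_ C : C) ⊗ b.right ⟶ wedgeObj a b) ≫ wedgeMap a b
      = pt a ▷ b.right := by
  dsimp [wedgeMap]
  rw [coprod.inr_desc]
  rfl

/-- Tensoring on the left preserves the pushout defining the smash product. -/
noncomputable def tensorSmashIsColimit (X : C) (a b : Under (⊤_ C)) :
    IsColimit (PushoutCocone.mk (X ◁ pinl a b) (X ◁ pinr a b)
      (by rw [← MonoidalCategory.whiskerLeft_comp, ← MonoidalCategory.whiskerLeft_comp,
          smash_cond]) :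
      PushoutCocone (X ◁ wedgeMap a b) (X ◁ terminal.from (wedgeObj a b))) :=
  isColimitOfHasPushoutOfPreservesColimit (tensorLeft X) _ _

/-- Tensoring on the left preserves the coproduct defining the wedge object. -/
noncomputable def tensorWedgeIsColimit (X : C) (a b : Under (⊤_ C)) :
    IsColimit (BinaryCofan.mk
      (X ◁ (coprod.inl : a.right ⊗ (⊤_ C : C) ⟶ wedgeObj a b))
      (X ◁ (coprod.inr : (⊤_ C : C) ⊗ b.right ⟶ wedgeObj a b))) :=
  isColimitOfHasBinaryCoproductOfPreservesColimit (tensorLeft X) _ _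

theorem tensorWedge_hom_ext {X Z : C} (a b : Under (⊤_ C)) {k l : X ⊗ wedgeObj a b ⟶ Z}
    (h1 : X ◁ (coprod.inl : a.right ⊗ (⊤_ C : C) ⟶ wedgeObj a b) ≫ k
        = X ◁ (coprod.inl : a.right ⊗ (⊤_ C : C) ⟶ wedgeObj a b) ≫ l)
    (h2 : X ◁ (coprod.inr : (⊤_ C : C) ⊗ b.right ⟶ wedgeObj a b) ≫ k
        = X ◁ (coprod.inr : (⊤_ C : C) ⊗ b.right ⟶ wedgeObj a b) ≫ l) : k = l :=
  BinaryCofan.IsColimit.hom_ext (tensorWedgeIsColimit X a b) h1 h2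

/-- Descent along the tensored smash pushout. -/
noncomputable def smashDesc {X Z : C} (a b : Under (⊤_ C))
    (u : X ⊗ (a.right ⊗ b.right) ⟶ Z) (v : X ⊗ (⊤_ C : C) ⟶ Z)
    (w : X ◁ wedgeMap a b ≫ u = X ◁ terminal.from (wedgeObj a b) ≫ v) :
    X ⊗ (smash a b).right ⟶ Z :=
  PushoutCocone.IsColimit.desc (tensorSmashIsColimit X a b) u v w

theorem inl_smashDesc {X Z : C} (a b : Under (⊤_ C))
    (u : X ⊗ (a.right ⊗ b.right) ⟶ Z) (v : X ⊗ (⊤_ C : C) ⟶ Z)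
    (w : X ◁ wedgeMap a b ≫ u = X ◁ terminal.from (wedgeObj a b) ≫ v) :
    X ◁ pinl a b ≫ smashDesc a b u v w = u :=
  PushoutCocone.IsColimit.inl_desc (tensorSmashIsColimit X a b) u v w

theorem inr_smashDesc {X Z : C} (a b : Under (⊤_ C))
    (u : X ⊗ (a.right ⊗ b.right) ⟶ Z) (v : X ⊗ (⊤_ C : C) ⟶ Z)
    (w : X ◁ wedgeMap a b ≫ u = X ◁ terminal.from (wedgeObj a b) ≫ v) :
    X ◁ pinr a b ≫ smashDesc a b u v w = v :=
  PushoutCocone.IsColimit.inr_desc (tensorSmashIsColimit X a b) u v w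

theorem smashDesc_hom_ext {X Z : C} (a b : Under (⊤_ C))
    {k l : X ⊗ (smash a b).right ⟶ Z}
    (h1 : X ◁ pinl a b ≫ k = X ◁ pinl a b ≫ l)
    (h2 : X ◁ pinr a b ≫ k = X ◁ pinr a b ≫ l) : k = l :=
  PushoutCocone.IsColimit.hom_ext (tensorSmashIsColimit X a b) h1 h2

theorem point_pinl_left (a b : Under (⊤_ C)) :
    (a.right ◁ pt b) ≫ pinl a b = terminal.from _ ≫ pinr a b := by
  rw [← wedge_inl]
  erw [Category.assoc, smash_cond]
  erw [← Category.assoc]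
  exact point_comp_ext rfl _

theorem point_pinl_right (a b : Under (⊤_ C)) :
    (pt a ▷ b.right) ≫ pinl a b = terminal.from _ ≫ pinr a b := by
  rw [← wedge_inr]
  erw [Category.assoc, smash_cond]
  erw [← Category.assoc]
  exact point_comp_ext rfl _

/- #### The forward map -/

/-- The double evaluation map for the iterated based hom. -/
noncomputable def ev2 (a b c : Under (⊤_ C)) :
    b.right ⊗ (a.right ⊗ (basedHom a (basedHom b c)).right) ⟶ c.right :=
  uncurry (uncurry (bfst a (basedHom b c)) ≫ bfst b c)

/-- The evaluation map `(a ⊗ b) ⊗ hom_*(a, hom_*(b,c)) ⟶ c`. -/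
noncomputable def evR (a b c : Under (⊤_ C)) :
    (a.right ⊗ b.right) ⊗ (basedHom a (basedHom b c)).right ⟶ c.right :=
  (β_ a.right b.right).hom ▷ _ ≫ (α_ _ _ _).hom ≫ ev2 a b c

theorem whiskerLeft_ev2 (a b c : Under (⊤_ C)) {Y : C}
    (u : Y ⟶ (basedHom a (basedHom b c)).right) :
    b.right ◁ (a.right ◁ u) ≫ ev2 a b c
      = uncurry (uncurry (u ≫ bfst a (basedHom b c)) ≫ bfst b c) := by
  rw [ev2, ← uncurry_natural_left (a.right ◁ u), ← Category.assoc,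
    ← uncurry_natural_left u]

theorem whiskerLeft_evR (a b c : Under (⊤_ C)) {Y : C}
    (u : Y ⟶ (basedHom a (basedHom b c)).right) :
    (a.right ⊗ b.right) ◁ u ≫ evR a b c
      = (β_ a.right b.right).hom ▷ Y ≫ (α_ _ _ _).hom ≫
        uncurry (uncurry (u ≫ bfst a (basedHom b c)) ≫ bfst b c) := by
  rw [evR, whisker_exchange_assoc, associator_naturality_right_assoc, whiskerLeft_ev2]

theorem bpoint_evR (a b c : Under (⊤_ C)) :
    ((a.right ◁ pt b) ▷ (basedHom a (basedHom b c)).right) ≫ evR a b c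
      = terminal.from _ ≫ pt c := by
  rw [evR, ← Category.assoc, ← comp_whiskerRight,
    BraidedCategory.braiding_naturality_right, comp_whiskerRight, Category.assoc,
    associator_naturality_left_assoc, ev2, point_uncurry b c]
  simp only [← Category.assoc]
  exact point_comp_ext rfl _

theorem apoint_evR (a b c : Under (⊤_ C)) :
    ((pt a ▷ b.right) ▷ (basedHom a (basedHom b c)).right) ≫ evR a b c
      = terminal.from _ ≫ pt c := by
  rw [evR, ← Category.assoc, ← comp_whiskerRight,
    BraidedCategory.braiding_naturality_left, comp_whiskerRight, Category.assoc,
    associator_naturality_middle_assoc, ev2, ← uncurry_natural_left]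
  have e2 : (pt a ▷ (basedHom a (basedHom b c)).right ≫
        uncurry (bfst a (basedHom b c))) ≫ bfst b c
      = terminal.from _ ≫ pt (basedHom b c) ≫ bfst b c := by
    have e0 : pt a ▷ (basedHom a (basedHom b c)).right ≫ uncurry (bfst a (basedHom b c))
        = terminal.from _ ≫ pt (basedHom b c) := by
      simpa using point_uncurry a (basedHom b c) (𝟙 _)
    rw [e0, Category.assoc]
  rw [← Category.assoc (pt a ▷ _), e2, pt_bfst, uncurry_basedHomPointFst]
  simp only [← Category.assoc]
  exact point_comp_ext rfl _

/-- The descended evaluation `hom_*(a, hom_*(b,c)) ⊗ (a ∧ b) ⟶ c`. -/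
noncomputable def smashPre (a b c : Under (⊤_ C)) :
    (basedHom a (basedHom b c)).right ⊗ (smash a b).right ⟶ c.right :=
  smashDesc a b ((β_ _ _).hom ≫ evR a b c) (terminal.from _ ≫ pt c)
    (by
      apply tensorWedge_hom_ext a b
      · erw [← MonoidalCategory.whiskerLeft_comp_assoc, wedge_inl,
          BraidedCategory.braiding_naturality_right_assoc, bpoint_evR]
        simp only [← Category.assoc]
        exact (point_comp_ext rfl _).trans (Category.assoc _ _ _)
      · erw [← MonoidalCategory.whiskerLeft_comp_assoc, wedge_inr,
          BraidedCategory.braiding_naturality_right_assoc, apoint_evR]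
        simp only [← Category.assoc]
        exact (point_comp_ext rfl _).trans (Category.assoc _ _ _))

theorem inl_smashPre (a b c : Under (⊤_ C)) :
    (basedHom a (basedHom b c)).right ◁ pinl a b ≫ smashPre a b c
      = (β_ _ _).hom ≫ evR a b c :=
  inl_smashDesc _ _ _ _ _

theorem inr_smashPre (a b c : Under (⊤_ C)) :
    (basedHom a (basedHom b c)).right ◁ pinr a b ≫ smashPre a b c
      = terminal.from _ ≫ pt c :=
  inr_smashDesc _ _ _ _ _

/-- First component of the forward map. -/
noncomputable def fwdFst (a b c : Under (⊤_ C)) :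
    (basedHom a (basedHom b c)).right ⟶ (ihom (smash a b).right).obj c.right :=
  curry ((β_ _ _).hom ≫ smashPre a b c)

theorem uncurry_fwdFst (a b c : Under (⊤_ C)) :
    uncurry (fwdFst a b c) = (β_ _ _).hom ≫ smashPre a b c :=
  uncurry_curry _

theorem fwd_w (a b c : Under (⊤_ C)) :
    fwdFst a b c ≫ (pre (smash a b).hom).app c.right
      = terminal.from _ ≫ pointLeg (⊤_ C : C) c := by
  apply uncurry_injective
  rw [uncurry_comp_pre, uncurry_pointLeg, uncurry_fwdFst]
  rw [show (smash a b).hom = pinr a b from rfl,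
    BraidedCategory.braiding_naturality_left_assoc, inr_smashPre]
  simp only [← Category.assoc]
  exact point_comp_ext rfl _

/-- The underlying forward map `hom_*(a, hom_*(b,c)) ⟶ hom_*(a ∧ b, c)`. -/
noncomputable def fwd (a b c : Under (⊤_ C)) :
    (basedHom a (basedHom b c)).right ⟶ (basedHom (smash a b) c).right :=
  blift (fwdFst a b c) (fwd_w a b c)

theorem fwd_fst (a b c : Under (⊤_ C)) :
    fwd a b c ≫ bfst (smash a b) c = fwdFst a b c :=
  blift_fst _ _

/- #### The backward map -/

/-- The uncurried backward evaluation. -/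
noncomputable def mB (a b c : Under (⊤_ C)) :
    b.right ⊗ (a.right ⊗ (basedHom (smash a b) c).right) ⟶ c.right :=
  (α_ _ _ _).inv ≫ (β_ b.right a.right).hom ▷ _ ≫
    uncurry (bfst (smash a b) c ≫ (pre (pinl a b)).app c.right)

theorem whiskerLeft_mB (a b c : Under (⊤_ C)) {Y : C}
    (u : Y ⟶ (basedHom (smash a b) c).right) :
    b.right ◁ (a.right ◁ u) ≫ mB a b c
      = (α_ _ _ _).inv ≫ (β_ b.right a.right).hom ▷ Y ≫
        uncurry (u ≫ bfst (smash a b) c ≫ (pre (pinl a b)).app c.right) := by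
  rw [mB, associator_inv_naturality_right_assoc, whisker_exchange_assoc,
    ← uncurry_natural_left]

theorem pinr_uncurry_bfst (a b c : Under (⊤_ C)) :
    pinr a b ▷ (basedHom (smash a b) c).right ≫ uncurry (bfst (smash a b) c)
      = terminal.from _ ≫ pt c := by
  simpa [pt_smash] using point_uncurry (smash a b) c (𝟙 _)

theorem bpoint_mB (a b c : Under (⊤_ C)) :
    pt b ▷ (a.right ⊗ (basedHom (smash a b) c).right) ≫ mB a b c
      = terminal.from _ ≫ pt c := by
  rw [mB, associator_inv_naturality_left_assoc, ← comp_whiskerRight_assoc,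
    BraidedCategory.braiding_naturality_left, uncurry_comp_pre,
    comp_whiskerRight_assoc, ← comp_whiskerRight_assoc (a.right ◁ pt b) (pinl a b),
    point_pinl_left, comp_whiskerRight_assoc, pinr_uncurry_bfst]
  simp only [← Category.assoc]
  exact point_comp_ext rfl _

theorem apoint_mB (a b c : Under (⊤_ C)) :
    b.right ◁ (pt a ▷ (basedHom (smash a b) c).right) ≫ mB a b c
      = terminal.from _ ≫ pt c := by
  rw [mB, associator_inv_naturality_middle_assoc, ← comp_whiskerRight_assoc,
    BraidedCategory.braiding_naturality_right, uncurry_comp_pre,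
    comp_whiskerRight_assoc, ← comp_whiskerRight_assoc (pt a ▷ b.right) (pinl a b),
    point_pinl_right, comp_whiskerRight_assoc, pinr_uncurry_bfst]
  simp only [← Category.assoc]
  exact point_comp_ext rfl _

theorem pm_w (a b c : Under (⊤_ C)) :
    curry (mB a b c) ≫ (pre b.hom).app c.right
      = terminal.from (a.right ⊗ (basedHom (smash a b) c).right) ≫
        pointLeg (⊤_ C : C) c := by
  apply uncurry_injective
  rw [uncurry_comp_pre, uncurry_curry, uncurry_pointLeg]
  exact bpoint_mB a b c

/-- The backward evaluation into `hom_*(b, c)`. -/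
noncomputable def pm (a b c : Under (⊤_ C)) :
    a.right ⊗ (basedHom (smash a b) c).right ⟶ (basedHom b c).right :=
  blift (curry (mB a b c)) (pm_w a b c)

theorem pm_fst (a b c : Under (⊤_ C)) :
    pm a b c ≫ bfst b c = curry (mB a b c) :=
  blift_fst _ _

/-- The first component of the backward map. -/
noncomputable def bwdFst (a b c : Under (⊤_ C)) :
    (basedHom (smash a b) c).right ⟶ (ihom a.right).obj (basedHom b c).right :=
  curry (pm a b c)

theorem uncurry_bwdFst (a b c : Under (⊤_ C)) :
    uncurry (bwdFst a b c) = pm a b c :=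
  uncurry_curry _

theorem bwd_w (a b c : Under (⊤_ C)) :
    bwdFst a b c ≫ (pre a.hom).app (basedHom b c).right
      = terminal.from _ ≫ pointLeg (⊤_ C : C) (basedHom b c) := by
  apply uncurry_injective
  rw [uncurry_comp_pre, uncurry_bwdFst, uncurry_pointLeg]
  apply basedHom_hom_ext b c
  rw [Category.assoc, pm_fst, Category.assoc, pt_bfst]
  apply uncurry_injective
  rw [uncurry_natural_left, uncurry_curry, uncurry_basedHomPointFst]
  refine (apoint_mB a b c).trans ?_
  exact point_comp_ext rfl _

/-- The underlying backward map `hom_*(a ∧ b, c) ⟶ hom_*(a, hom_*(b,c))`. -/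
noncomputable def bwd (a b c : Under (⊤_ C)) :
    (basedHom (smash a b) c).right ⟶ (basedHom a (basedHom b c)).right :=
  blift (bwdFst a b c) (bwd_w a b c)

theorem bwd_fst (a b c : Under (⊤_ C)) :
    bwd a b c ≫ bfst a (basedHom b c) = bwdFst a b c :=
  blift_fst _ _

/- #### The two maps are inverse isomorphisms -/

theorem braid_hom_eq_inv (X Y : C) : (β_ X Y).hom = (β_ Y X).inv := by
  rw [← cancel_mono (β_ Y X).hom, SymmetricCategory.symmetry, Iso.inv_hom_id]

theorem fwd_bwd (a b c : Under (⊤_ C)) : fwd a b c ≫ bwd a b c = 𝟙 _ := by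
  apply basedHom_hom_ext a (basedHom b c)
  rw [Category.assoc, bwd_fst, Category.id_comp]
  apply uncurry_injective
  rw [uncurry_natural_left, uncurry_bwdFst]
  apply basedHom_hom_ext b c
  rw [Category.assoc, pm_fst]
  apply uncurry_injective
  rw [uncurry_natural_left, uncurry_curry, whiskerLeft_mB, ← Category.assoc (fwd a b c),
    fwd_fst, uncurry_comp_pre, uncurry_fwdFst,
    BraidedCategory.braiding_naturality_left_assoc, inl_smashPre,
    SymmetricCategory.symmetry_assoc, evR, ← comp_whiskerRight_assoc,
    SymmetricCategory.symmetry, id_whiskerRight, Category.id_comp,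
    Iso.inv_hom_id_assoc, ev2]

theorem bwd_fwd (a b c : Under (⊤_ C)) : bwd a b c ≫ fwd a b c = 𝟙 _ := by
  apply basedHom_hom_ext (smash a b) c
  rw [Category.assoc, fwd_fst, Category.id_comp]
  apply uncurry_injective
  rw [uncurry_natural_left, uncurry_fwdFst,
    BraidedCategory.braiding_naturality_right_assoc, ← Iso.eq_inv_comp]
  apply smashDesc_hom_ext a b
  · rw [whisker_exchange_assoc, inl_smashPre,
      BraidedCategory.braiding_naturality_left_assoc, whiskerLeft_evR, bwd_fst,
      uncurry_bwdFst]
    have e1 : uncurry (pm a b c ≫ bfst b c) = mB a b c := by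
      rw [pm_fst, uncurry_curry]
    rw [e1, mB, Iso.hom_inv_id_assoc, ← comp_whiskerRight_assoc,
      SymmetricCategory.symmetry, id_whiskerRight, Category.id_comp,
      uncurry_comp_pre, ← braid_hom_eq_inv,
      BraidedCategory.braiding_naturality_right_assoc]
  · rw [whisker_exchange_assoc, inr_smashPre, ← braid_hom_eq_inv,
      BraidedCategory.braiding_naturality_right_assoc, pinr_uncurry_bfst]
    simp only [← Category.assoc]
    exact point_comp_ext rfl _

/- #### Compatibility with basepoints -/

theorem ptR_smashPre (a b c : Under (⊤_ C)) :
    pt (basedHom a (basedHom b c)) ▷ (smash a b).right ≫ smashPre a b c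
      = terminal.from _ ≫ pt c := by
  apply smashDesc_hom_ext a b
  · rw [whisker_exchange_assoc, inl_smashPre,
      BraidedCategory.braiding_naturality_left_assoc, whiskerLeft_evR, pt_bfst]
    have e1 : uncurry (uncurry (basedHomPointFst a (basedHom b c)) ≫ bfst b c)
        = terminal.from _ ≫ pt c := by
      rw [uncurry_basedHomPointFst', Category.assoc, pt_bfst,
        uncurry_basedHomPointFst]

    rw [e1]
    simp only [← Category.assoc]
    exact point_comp_ext rfl _
  · rw [whisker_exchange_assoc, inr_smashPre]
    simp only [← Category.assoc]
    exact point_comp_ext rfl _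

theorem point_fwd (a b c : Under (⊤_ C)) :
    pt (basedHom a (basedHom b c)) ≫ fwd a b c = pt (basedHom (smash a b) c) := by
  apply basedHom_hom_ext (smash a b) c
  rw [Category.assoc, fwd_fst, pt_bfst]
  apply uncurry_injective
  rw [uncurry_natural_left, uncurry_fwdFst, uncurry_basedHomPointFst',
    BraidedCategory.braiding_naturality_right_assoc, ptR_smashPre]
  simp only [← Category.assoc]
  exact point_comp_ext rfl _

/- #### Naturality -/

theorem basedHomMap_fst {a a' x x' : Under (⊤_ C)} (f : a ⟶ a') (g : x ⟶ x') :
    (basedHomMap f g).right ≫ bfst a x'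
      = bfst a' x ≫ (ihom a'.right).map g.right ≫ (pre f.right).app x'.right := by
  dsimp only [basedHomMap, Under.homMk_right, bfst]
  erw [pullback.lift_fst]
  rfl

theorem pinl_smashMap {a a' b b' : Under (⊤_ C)} (f : a ⟶ a') (g : b ⟶ b') :
    pinl a b ≫ (smashMap f g).right = (f.right ⊗ₘ g.right) ≫ pinl a' b' := by
  dsimp only [smashMap, Under.homMk_right, pinl]
  erw [pushout.inl_desc]
  rfl

theorem pinr_smashMap {a a' b b' : Under (⊤_ C)} (f : a ⟶ a') (g : b ⟶ b') :
    pinr a b ≫ (smashMap f g).right = pinr a' b' := by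
  dsimp only [smashMap, Under.homMk_right, pinr]
  erw [pushout.inr_desc, Category.id_comp]

theorem pt_w {x y : Under (⊤_ C)} (f : x ⟶ y) : pt x ≫ f.right = pt y :=
  Under.w f

theorem natA_core (a a' b c : Under (⊤_ C)) (f : a ⟶ a') :
    (basedHomMap f (𝟙 (basedHom b c))).right ▷ (smash a b).right ≫ smashPre a b c
      = (basedHom a' (basedHom b c)).right ◁ (smashMap f (𝟙 b)).right ≫
        smashPre a' b c := by
  apply smashDesc_hom_ext a b
  · rw [whisker_exchange_assoc, inl_smashPre,
      BraidedCategory.braiding_naturality_left_assoc, whiskerLeft_evR,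
      basedHomMap_fst, ← MonoidalCategory.whiskerLeft_comp_assoc, pinl_smashMap,
      MonoidalCategory.whiskerLeft_comp, Category.assoc, inl_smashPre]
    simp only [Under.id_right, CategoryTheory.Functor.map_id, Category.id_comp,
      tensorHom_id]
    rw [uncurry_comp_pre, Category.assoc (f.right ▷ _),
      uncurry_natural_left (f.right ▷ _),
      BraidedCategory.braiding_naturality_right_assoc, evR,
      ← comp_whiskerRight_assoc, BraidedCategory.braiding_naturality_left,
      comp_whiskerRight, Category.assoc, associator_naturality_middle_assoc, ev2]
  · rw [whisker_exchange_assoc, inr_smashPre,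
      ← MonoidalCategory.whiskerLeft_comp_assoc, pinr_smashMap, inr_smashPre]
    simp only [← Category.assoc]
    exact point_comp_ext rfl _

theorem natB_core (a b b' c : Under (⊤_ C)) (g : b ⟶ b') :
    (basedHomMap (𝟙 a) (basedHomMap g (𝟙 c))).right ▷ (smash a b).right ≫
        smashPre a b c
      = (basedHom a (basedHom b' c)).right ◁ (smashMap (𝟙 a) g).right ≫
        smashPre a b' c := by
  apply smashDesc_hom_ext a b
  · rw [whisker_exchange_assoc, inl_smashPre,
      BraidedCategory.braiding_naturality_left_assoc, whiskerLeft_evR,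
      basedHomMap_fst, ← MonoidalCategory.whiskerLeft_comp_assoc, pinl_smashMap,
      MonoidalCategory.whiskerLeft_comp, Category.assoc, inl_smashPre]
    simp only [Under.id_right, MonoidalClosed.pre_id, NatTrans.id_app,
      Category.comp_id, id_tensorHom]
    rw [uncurry_natural_right, Category.assoc (uncurry _), basedHomMap_fst]
    simp only [Under.id_right, CategoryTheory.Functor.map_id, Category.id_comp]
    rw [← Category.assoc (uncurry _), uncurry_comp_pre,
      BraidedCategory.braiding_naturality_right_assoc, evR,
      ← comp_whiskerRight_assoc, BraidedCategory.braiding_naturality_right,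
      comp_whiskerRight, Category.assoc, associator_naturality_left_assoc, ev2]
  · rw [whisker_exchange_assoc, inr_smashPre,
      ← MonoidalCategory.whiskerLeft_comp_assoc, pinr_smashMap, inr_smashPre]
    simp only [← Category.assoc]
    exact point_comp_ext rfl _

theorem natC_core (a b c c' : Under (⊤_ C)) (h : c ⟶ c') :
    (basedHomMap (𝟙 a) (basedHomMap (𝟙 b) h)).right ▷ (smash a b).right ≫
        smashPre a b c'
      = smashPre a b c ≫ h.right := by
  apply smashDesc_hom_ext a b
  · rw [whisker_exchange_assoc, inl_smashPre,
      BraidedCategory.braiding_naturality_left_assoc, whiskerLeft_evR,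
      basedHomMap_fst, ← Category.assoc _ (smashPre a b c) h.right, inl_smashPre]
    simp only [Under.id_right, MonoidalClosed.pre_id, NatTrans.id_app,
      Category.comp_id]
    rw [uncurry_natural_right, Category.assoc (uncurry _), basedHomMap_fst]
    simp only [Under.id_right, MonoidalClosed.pre_id, NatTrans.id_app,
      Category.comp_id]
    rw [← Category.assoc (uncurry _), uncurry_natural_right, Category.assoc,
      evR, ev2]
    simp only [Category.assoc]
  · rw [whisker_exchange_assoc, inr_smashPre,
      ← Category.assoc _ (smashPre a b c) h.right, inr_smashPre, Category.assoc,
      pt_w]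
    simp only [← Category.assoc]
    exact point_comp_ext rfl _

theorem natA_fst (a a' b c : Under (⊤_ C)) (f : a ⟶ a') :
    (basedHomMap f (𝟙 (basedHom b c))).right ≫ fwdFst a b c
      = fwdFst a' b c ≫ (pre (smashMap f (𝟙 b)).right).app c.right := by
  apply uncurry_injective
  rw [uncurry_natural_left, uncurry_fwdFst, uncurry_comp_pre, uncurry_fwdFst,
    BraidedCategory.braiding_naturality_right_assoc,
    BraidedCategory.braiding_naturality_left_assoc, natA_core]

theorem natB_fst (a b b' c : Under (⊤_ C)) (g : b ⟶ b') :
    (basedHomMap (𝟙 a) (basedHomMap g (𝟙 c))).right ≫ fwdFst a b c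
      = fwdFst a b' c ≫ (pre (smashMap (𝟙 a) g).right).app c.right := by
  apply uncurry_injective
  rw [uncurry_natural_left, uncurry_fwdFst, uncurry_comp_pre, uncurry_fwdFst,
    BraidedCategory.braiding_naturality_right_assoc,
    BraidedCategory.braiding_naturality_left_assoc, natB_core]

theorem natC_fst (a b c c' : Under (⊤_ C)) (h : c ⟶ c') :
    (basedHomMap (𝟙 a) (basedHomMap (𝟙 b) h)).right ≫ fwdFst a b c'
      = fwdFst a b c ≫ (ihom (smash a b).right).map h.right := by
  apply uncurry_injective
  rw [uncurry_natural_left, uncurry_fwdFst, uncurry_natural_right, uncurry_fwdFst,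
    BraidedCategory.braiding_naturality_right_assoc, Category.assoc, natC_core]

theorem natA_right (a a' b c : Under (⊤_ C)) (f : a ⟶ a') :
    (basedHomMap f (𝟙 (basedHom b c))).right ≫ fwd a b c
      = fwd a' b c ≫ (basedHomMap (smashMap f (𝟙 b)) (𝟙 c)).right := by
  apply basedHom_hom_ext (smash a b) c
  rw [Category.assoc, fwd_fst, Category.assoc, basedHomMap_fst]
  simp only [Under.id_right, CategoryTheory.Functor.map_id, Category.id_comp]
  rw [← Category.assoc (fwd a' b c), fwd_fst]
  exact natA_fst a a' b c f

theorem natB_right (a b b' c : Under (⊤_ C)) (g : b ⟶ b') :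
    (basedHomMap (𝟙 a) (basedHomMap g (𝟙 c))).right ≫ fwd a b c
      = fwd a b' c ≫ (basedHomMap (smashMap (𝟙 a) g) (𝟙 c)).right := by
  apply basedHom_hom_ext (smash a b) c
  rw [Category.assoc, fwd_fst, Category.assoc, basedHomMap_fst]
  simp only [Under.id_right, CategoryTheory.Functor.map_id, Category.id_comp]
  rw [← Category.assoc (fwd a b' c), fwd_fst]
  exact natB_fst a b b' c g

theorem natC_right (a b c c' : Under (⊤_ C)) (h : c ⟶ c') :
    (basedHomMap (𝟙 a) (basedHomMap (𝟙 b) h)).right ≫ fwd a b c'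
      = fwd a b c ≫ (basedHomMap (𝟙 (smash a b)) h).right := by
  apply basedHom_hom_ext (smash a b) c'
  rw [Category.assoc, fwd_fst, Category.assoc, basedHomMap_fst]
  simp only [Under.id_right, MonoidalClosed.pre_id, NatTrans.id_app,
    Category.comp_id]
  rw [← Category.assoc (fwd a b c), fwd_fst]
  exact natC_fst a b c c' h

/-- The isomorphism of pointed objects `hom_*(a, hom_*(b,c)) ≅ hom_*(a ∧ b, c)`. -/
noncomputable def eIso (a b c : Under (⊤_ C)) :
    basedHom a (basedHom b c) ≅ basedHom (smash a b) c :=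
  Under.isoMk ⟨fwd a b c, bwd a b c, fwd_bwd a b c, bwd_fwd a b c⟩
    (by exact point_fwd a b c)

/-- For pointed objects `a`, `b`, `c` there is an isomorphism
`hom_*(a, hom_*(b, c)) ≅ hom_*(a ∧ b, c)` of pointed objects (hence compatible with the
basepoint morphisms from `t`), natural in `a`, `b` and `c`. -/
theorem basedHom_smash_iso :
    ∃ e : ∀ a b c : Under (⊤_ C), basedHom a (basedHom b c) ≅ basedHom (smash a b) c,
      (∀ (a a' b c : Under (⊤_ C)) (f : a ⟶ a'),
        basedHomMap f (𝟙 (basedHom b c)) ≫ (e a b c).hom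
          = (e a' b c).hom ≫ basedHomMap (smashMap f (𝟙 b)) (𝟙 c)) ∧
      (∀ (a b b' c : Under (⊤_ C)) (g : b ⟶ b'),
        basedHomMap (𝟙 a) (basedHomMap g (𝟙 c)) ≫ (e a b c).hom
          = (e a b' c).hom ≫ basedHomMap (smashMap (𝟙 a) g) (𝟙 c)) ∧
      (∀ (a b c c' : Under (⊤_ C)) (h : c ⟶ c'),
        basedHomMap (𝟙 a) (basedHomMap (𝟙 b) h) ≫ (e a b c').hom
          = (e a b c).hom ≫ basedHomMap (𝟙 (smash a b)) h) := by
  refine ⟨fun a b c => eIso a b c, ?_, ?_, ?_⟩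
  · intro a a' b c f
    apply Under.UnderMorphism.ext
    simp only [Under.comp_right, eIso, Under.isoMk_hom_right]
    exact natA_right a a' b c f
  · intro a b b' c g
    apply Under.UnderMorphism.ext
    simp only [Under.comp_right, eIso, Under.isoMk_hom_right]
    exact natB_right a b b' c g
  · intro a b c c' h
    apply Under.UnderMorphism.ext
    simp only [Under.comp_right, eIso, Under.isoMk_hom_right]
    exact natC_right a b c c' h

end BasedObjects
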